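/- Let a ∈ (0,1), β ∈ (0,1), θ ∈ (0,1] be real numbers satisfying θβ ≤ a, β(1−θ) < 1−a, and a ≤ θ. Then (1−a)·log(1−a) − (1−a−β+θβ)·log(1−a−β+θβ) + (1−β)·log(1−β) ≤ 0. -/

import Mathlib

lemma helper_convex (x y z : ℝ) (hz : 0 ≤ z) (hzx : z ≤ x) (hzy : z ≤ y) :
    x * Real.log x + y * Real.log y ≤
      z * Real.log z + (x + y - z) * Real.log (x + y - z) := by
  set w := x + y - z with hw
  have hxw : x ≤ w := by simp [hw]; linarith
  have hyw : y ≤ w := by simp [hw]; linarith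
  rcases eq_or_lt_of_le (le_trans hzx hxw) with h | h
  · have hx : x = z := le_antisymm (by linarith) hzx
    have hy : y = z := le_antisymm (by linarith) hzy
    simp [hx, hy, ← h]
  · set l := (w - x) / (w - z) with hl
    have hne : w - z ≠ 0 := by linarith
    have hl0 : 0 ≤ l := div_nonneg (by linarith) (by linarith)
    have hl1 : l ≤ 1 := by
      rw [hl, div_le_one (by linarith)]; linarith
    have hlw : l * (w - z) = w - x := by rw [hl]; exact div_mul_cancel₀ _ hne
    have hx : l * z + (1 - l) * w = x := by
      linear_combination -hlw
    have hy : (1 - l) * z + l * w = y := by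
      linear_combination hlw + hw
    have hzm : z ∈ Set.Ici (0:ℝ) := hz
    have hwm : w ∈ Set.Ici (0:ℝ) := le_trans hz (by linarith)
    have H1 := Real.convexOn_mul_log.2 hzm hwm hl0 (by linarith : (0:ℝ) ≤ 1 - l)
      (by ring)
    have H2 := Real.convexOn_mul_log.2 hzm hwm (by linarith : (0:ℝ) ≤ 1 - l) hl0
      (by ring)
    simp only [smul_eq_mul] at H1 H2
    rw [hx] at H1
    rw [hy] at H2
    nlinarith [H1, H2]

theorem stmt_17 (a β θ : ℝ) (ha : a ∈ Set.Ioo (0 : ℝ) 1)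
    (hβ : β ∈ Set.Ioo (0 : ℝ) 1) (hθ : θ ∈ Set.Ioc (0 : ℝ) 1)
    (h1 : θ * β ≤ a) (h2 : β * (1 - θ) < 1 - a) (h3 : a ≤ θ) :
    (1 - a) * Real.log (1 - a) -
      (1 - a - β + θ * β) * Real.log (1 - a - β + θ * β) +
      (1 - β) * Real.log (1 - β) ≤ 0 := by
  obtain ⟨ha0, ha1⟩ := ha
  obtain ⟨hb0, hb1⟩ := hβ
  obtain ⟨ht0, ht1⟩ := hθ
  have hz : (0:ℝ) ≤ 1 - a - β + θ * β := by nlinarith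
  have key := helper_convex (1 - a) (1 - β) (1 - a - β + θ * β) hz
    (by nlinarith) (by nlinarith)
  have hw : (1 - a) + (1 - β) - (1 - a - β + θ * β) = 1 - θ * β := by ring
  rw [hw] at key
  have hw0 : 0 < 1 - θ * β := by nlinarith
  have hw1 : 1 - θ * β ≤ 1 := by nlinarith
  have hlog : Real.log (1 - θ * β) ≤ 0 := Real.log_nonpos (le_of_lt hw0) hw1
  nlinarith [mul_nonneg (le_of_lt hw0) (neg_nonneg.2 hlog)]
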